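/- The rule-based MI-inconsistency measure I^RB_MI, defined as the number of minimal inconsistent subsets containing no complementary pair of facts, satisfies Rule Consistency: I^RB_MI(B) = 0 iff R(B) ∪ F' is consistent for all consistent subsets F' ⊆ F(B). -/
import Mathlib


open scoped Classical

/-- A rule over atoms `A`: literals are pairs (atom, sign). -/
structure Rule (A : Type*) where
  body : Finset (A × Bool)
  head : A × Bool
deriving DecidableEq

abbrev RuleBase (A : Type*) := Finset (Rule A)

variable {A : Type*}

/-- The complement of a literal. -/
def litCompl (l : A × Bool) : A × Bool := (l.1, !l.2)

/-- The fact with head `l` (empty body). -/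
def factR (l : A × Bool) : Rule A := ⟨∅, l⟩

/-- The facts (empty-body rules) of a rule base. -/
noncomputable def facts [DecidableEq A] (B : RuleBase A) : RuleBase A :=
  B.filter (fun r => r.body = ∅)

/-- The proper (non-fact) rules of a rule base. -/
noncomputable def properRules [DecidableEq A] (B : RuleBase A) : RuleBase A :=
  B.filter (fun r => r.body ≠ ∅)

/-- A set of literals is closed w.r.t. a rule base. -/
def Closed (B : RuleBase A) (M : Set (A × Bool)) : Prop :=
  ∀ r ∈ B, (↑r.body ⊆ M) → r.head ∈ M

/-- The minimal model: the smallest closed set of literals. -/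
def minModel (B : RuleBase A) : Set (A × Bool) :=
  {l | ∀ M : Set (A × Bool), Closed B M → l ∈ M}

/-- A set of literals is consistent if it contains no complementary pair. -/
def ConsistentLits (M : Set (A × Bool)) : Prop :=
  ¬ ∃ a : A, (a, true) ∈ M ∧ (a, false) ∈ M

/-- A rule base is consistent if its minimal model is consistent. -/
def Consistent (B : RuleBase A) : Prop := ConsistentLits (minModel B)

/-- The minimal inconsistent subsets of a rule base. -/
def MI (B : RuleBase A) : Set (RuleBase A) :=
  { M | M ⊆ B ∧ ¬ Consistent M ∧ ∀ M' ⊂ M, Consistent M' }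

/-- `M` contains a complementary pair of facts. -/
def hasComplFactPair (M : RuleBase A) : Prop :=
  ∃ a : A, factR (a, true) ∈ M ∧ factR (a, false) ∈ M

/-- Minimal inconsistent subsets containing no complementary pair of facts. -/
def MIF (B : RuleBase A) : Set (RuleBase A) :=
  { M ∈ MI B | ¬ hasComplFactPair M }

/-- A formula is free in a rule base if it belongs to no minimal inconsistent subset. -/
def Free (r : Rule A) (B : RuleBase A) : Prop := ∀ M ∈ MI B, r ∉ M

/-- Rule consistency: the rules together with any consistent set of facts are consistent. -/
def RuleConsistent [DecidableEq A] (B : RuleBase A) : Prop :=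
  ∀ F' ⊆ facts B, Consistent F' → Consistent (properRules B ∪ F')

/-- The drastic inconsistency measure. -/
noncomputable def Idr (B : RuleBase A) : ℕ := if Consistent B then 0 else 1

/-- The rule-based drastic inconsistency measure. -/
noncomputable def IRBd (B : RuleBase A) : ℕ := if MIF B = ∅ then 0 else 1

/-- The rule-based MI-inconsistency measure. -/
noncomputable def IRBMI (B : RuleBase A) : ℕ := (MIF B).ncard

/-- The rule-based problematic inconsistency measure: number of distinct
    non-fact rules occurring in some element of `MIF B`. -/
noncomputable def IRBp (B : RuleBase A) : ℕ :=
  {r : Rule A | r.body ≠ ∅ ∧ ∃ M ∈ MIF B, r ∈ M}.ncard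

/-- Three truth values. -/
inductive TV | t | b | f
deriving DecidableEq

def TV.negv : TV → TV
  | .t => .f
  | .f => .t
  | .b => .b

/-- Value of a literal under a three-valued interpretation. -/
def litVal (v : A → TV) (l : A × Bool) : TV :=
  if l.2 then v l.1 else (v l.1).negv

/-- Designated truth values. -/
def TV.des : TV → Prop
  | .f => False
  | _ => True

/-- Three-valued satisfaction of a rule. -/
def sat3 (v : A → TV) (r : Rule A) : Prop :=
  (∀ l ∈ r.body, (litVal v l).des) → (litVal v r.head).des

/-- The rule-based contension inconsistency measure. -/
noncomputable def IRBc (B : RuleBase A) : ℕ :=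
  sInf { n : ℕ | ∃ v : A → TV,
    (∀ M ∈ MIF B, ∀ r ∈ M, sat3 v r) ∧ n = {a : A | v a = TV.b}.ncard }

/-- The payoff of `α` in coalition `C` (w.r.t. rule base `B` and measure `I`). -/
noncomputable def CoalPayoff [DecidableEq A] (I : RuleBase A → ℝ) (B : RuleBase A)
    (α : Rule A) (C : RuleBase A) : ℝ :=
  ((Nat.factorial (C.card - 1) * Nat.factorial (B.card - C.card) : ℕ) : ℝ)
    / ((Nat.factorial B.card : ℕ) : ℝ) * (I C - I (C.erase α))

/-- The additional payoff shifted from facts to non-free rules. -/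
noncomputable def AddPayoff [DecidableEq A] (I : RuleBase A → ℝ) (B : RuleBase A)
    (r : Rule A) (C : RuleBase A) : ℝ :=
  if Free r C then 0
  else (∑ f ∈ C.filter (fun x => x.body = ∅), CoalPayoff I B f C)
        / ((C.filter (fun x => x.body ≠ ∅ ∧ ¬ Free x C)).card : ℝ)

/-- The adjusted Shapley inconsistency value. -/
noncomputable def Sstar [DecidableEq A] (I : RuleBase A → ℝ) (B : RuleBase A)
    (α : Rule A) : ℝ :=
  if α.body = ∅ then 0
  else ∑ C ∈ B.powerset, (CoalPayoff I B α C + AddPayoff I B α C)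

lemma minModel_mono {B B' : RuleBase A} (h : B ⊆ B') : minModel B ⊆ minModel B' := by
  intro l hl M hM
  exact hl M (fun r hr hb => hM r (h hr) hb)

lemma incons_mono {B B' : RuleBase A} (h : B ⊆ B') (hB : ¬ Consistent B) :
    ¬ Consistent B' := by
  intro hc
  apply hB
  intro ⟨a, h1, h2⟩
  exact hc ⟨a, minModel_mono h h1, minModel_mono h h2⟩

lemma fact_mem_minModel {B : RuleBase A} {l : A × Bool} (h : factR l ∈ B) :
    l ∈ minModel B := by
  intro M hM
  have := hM _ h (by simp [factR])
  simpa [factR] using this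

lemma exists_min : ∀ S : RuleBase A, ¬ Consistent S →
    ∃ M ⊆ S, ¬ Consistent M ∧ ∀ M' ⊂ M, Consistent M' := by
  intro S
  induction S using Finset.strongInductionOn with
  | _ S ih =>
    intro h
    by_cases hall : ∀ M' ⊂ S, Consistent M'
    · exact ⟨S, le_refl _, h, hall⟩
    · push_neg at hall
      obtain ⟨M', hM'sub, hM'inc⟩ := hall
      obtain ⟨M, h1, h2, h3⟩ := ih M' hM'sub hM'inc
      exact ⟨M, h1.trans hM'sub.subset, h2, h3⟩

theorem stmt6 [DecidableEq A] (B : RuleBase A) :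
    IRBMI B = 0 ↔ RuleConsistent B := by
  have hfin : (MIF B).Finite :=
    Set.Finite.subset B.powerset.finite_toSet
      (fun M hM => Finset.mem_coe.mpr (Finset.mem_powerset.mpr hM.1.1))
  rw [show (IRBMI B = 0 ↔ MIF B = ∅) from by
    unfold IRBMI; exact Set.ncard_eq_zero hfin]
  constructor
  · intro hemp F' hF' hcons
    by_contra hinc
    obtain ⟨M, hMsub, hMinc, hMmin⟩ := exists_min _ hinc
    have hMB : M ⊆ B := hMsub.trans (by
      intro r hr
      rcases Finset.mem_union.mp hr with h | h
      · exact Finset.filter_subset _ _ h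
      · exact (Finset.filter_subset _ _) (hF' h))
    have hMF : ¬ hasComplFactPair M := by
      rintro ⟨a, h1, h2⟩
      have hfact : ∀ b : Bool, factR (a, b) ∈ M → factR (a, b) ∈ F' := by
        intro b hb
        rcases Finset.mem_union.mp (hMsub hb) with h | h
        · exact absurd rfl (Finset.mem_filter.mp h).2
        · exact h
      exact hcons ⟨a, fact_mem_minModel (hfact _ h1),
        fact_mem_minModel (hfact _ h2)⟩
    exact Set.eq_empty_iff_forall_notMem.mp hemp M ⟨⟨hMB, hMinc, hMmin⟩, hMF⟩
  · intro hRC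
    rw [Set.eq_empty_iff_forall_notMem]
    rintro M ⟨⟨hMB, hMinc, hMmin⟩, hMF⟩
    set F' : RuleBase A := M.filter (fun r => r.body = ∅) with hF'def
    have hF'sub : F' ⊆ facts B := Finset.filter_subset_filter _ hMB
    have hfactshape : ∀ r ∈ F', r = factR r.head := by
      intro r hr
      have hb := (Finset.mem_filter.mp hr).2
      cases r with
      | mk body head => simp_all [factR]
    have hconsF' : Consistent F' := by
      rintro ⟨a, h1, h2⟩
      have hH : ∀ l, l ∈ minModel F' → factR l ∈ F' := by
        intro l hl
        exact hl {l | factR l ∈ F'} (by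
          intro r hr _
          have := hfactshape r hr
          simpa [← this] using hr)
      exact hMF ⟨a, Finset.filter_subset _ _ (hH _ h1),
        Finset.filter_subset _ _ (hH _ h2)⟩
    have hsub : M ⊆ properRules B ∪ F' := by
      intro r hr
      by_cases hb : r.body = ∅
      · exact Finset.mem_union_right _ (Finset.mem_filter.mpr ⟨hr, hb⟩)
      · exact Finset.mem_union_left _ (Finset.mem_filter.mpr ⟨hMB hr, hb⟩)
    exact incons_mono hsub hMinc (hRC F' hF'sub hconsF')
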